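/- arXiv:2005.11796 — 7 statements merged into one kernel-verified Lean document; each statement's English description precedes it below -/
import Mathlib

section
/- (First Welfare Theorem.) Let (S, p) be a Walrasian equilibrium of a market with finite agent set N and finite item set M. Then S maximizes social welfare: for every allocation S', ∑_{i∈N} v_i(S_i) ≥ ∑_{i∈N} v_i(S'_i). -/
/-- **First Welfare Theorem.** If `(S, p)` is a Walrasian equilibrium of a market with
finite agent set `N` and finite item set `M`, then the allocation `S` maximizes social
welfare among all allocations `S'`. -/
theorem first_welfare_theorem {N M : Type*} [Fintype N] [Fintype M] [DecidableEq M]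
    (v : N → Finset M → ℝ)
    (hnorm : ∀ i, v i ∅ = 0) (hnonneg : ∀ i X, 0 ≤ v i X)
    -- `S` is an allocation (pairwise disjoint bundles)
    (S : N → Finset M) (hS : ∀ i i', i ≠ i' → Disjoint (S i) (S i'))
    -- `p` is a nonnegative pricing
    (p : M → ℝ) (hp : ∀ j, 0 ≤ p j)
    -- Walrasian equilibrium condition (1): every agent's bundle maximizes her utility
    (hmax : ∀ i (X : Finset M), v i X - ∑ j ∈ X, p j ≤ v i (S i) - ∑ j ∈ S i, p j)
    -- Walrasian equilibrium condition (2): unallocated items have price zero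
    (hfree : ∀ j : M, (∀ i, j ∉ S i) → p j = 0)
    -- any other allocation `S'`
    (S' : N → Finset M) (hS' : ∀ i i', i ≠ i' → Disjoint (S' i) (S' i')) :
    ∑ i, v i (S' i) ≤ ∑ i, v i (S i) := by
  have hSsum : ∑ i, ∑ j ∈ S i, p j = ∑ j, p j := by
    rw [← Finset.sum_biUnion (fun i _ i' _ h => hS i i' h)]
    refine Finset.sum_subset (Finset.subset_univ _) (fun j _ hj => ?_)
    exact hfree j (fun i hi => hj (Finset.mem_biUnion.2 ⟨i, Finset.mem_univ i, hi⟩))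
  have hS'sum : ∑ i, ∑ j ∈ S' i, p j ≤ ∑ j, p j := by
    rw [← Finset.sum_biUnion (fun i _ i' _ h => hS' i i' h)]
    exact Finset.sum_le_sum_of_subset_of_nonneg (Finset.subset_univ _)
      (fun j _ _ => hp j)
  have key : ∑ i, (v i (S' i) - ∑ j ∈ S' i, p j) ≤ ∑ i, (v i (S i) - ∑ j ∈ S i, p j) :=
    Finset.sum_le_sum (fun i _ => hmax i (S' i))
  simp only [Finset.sum_sub_distrib] at key
  linarith
end

section
/- Let (S, p) be a Walrasian equilibrium of a market with finite agent set N and finite item set M, and let S' be any allocation with the same social welfare as S (equivalently, by the First Welfare Theorem, any welfare-maximizing allocation). Then (S', p) is also a Walrasian equilibrium. In particular, Walrasian equilibrium prices support every optimal allocation. -/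
/-- If `(S, p)` is a Walrasian equilibrium and `S'` is any allocation with the same social
welfare as `S` (equivalently, any welfare-maximizing allocation), then `(S', p)` is also a
Walrasian equilibrium: equilibrium prices support every optimal allocation. -/
theorem walrasian_prices_support_every_optimal_allocation
    {N M : Type*} [Fintype N] [Fintype M] [DecidableEq M]
    (v : N → Finset M → ℝ)
    (hnorm : ∀ i, v i ∅ = 0) (hnonneg : ∀ i X, 0 ≤ v i X)
    -- `S` is an allocation (pairwise disjoint bundles)
    (S : N → Finset M) (hS : ∀ i i', i ≠ i' → Disjoint (S i) (S i'))
    -- `p` is a nonnegative pricing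
    (p : M → ℝ) (hp : ∀ j, 0 ≤ p j)
    -- `(S, p)` is a Walrasian equilibrium
    (hmax : ∀ i (X : Finset M), v i X - ∑ j ∈ X, p j ≤ v i (S i) - ∑ j ∈ S i, p j)
    (hfree : ∀ j : M, (∀ i, j ∉ S i) → p j = 0)
    -- `S'` is an allocation with the same social welfare as `S`
    (S' : N → Finset M) (hS' : ∀ i i', i ≠ i' → Disjoint (S' i) (S' i'))
    (hsw : ∑ i, v i (S' i) = ∑ i, v i (S i)) :
    (∀ i (X : Finset M), v i X - ∑ j ∈ X, p j ≤ v i (S' i) - ∑ j ∈ S' i, p j) ∧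
    (∀ j : M, (∀ i, j ∉ S' i) → p j = 0) := by
  classical
  set T : Finset M := Finset.univ.biUnion S with hT
  set T' : Finset M := Finset.univ.biUnion S' with hT'
  have hsumS : ∑ i, ∑ j ∈ S i, p j = ∑ j ∈ T, p j := by
    rw [hT, Finset.sum_biUnion]
    intro i _ i' _ hii'
    exact hS i i' hii'
  have hsumS' : ∑ i, ∑ j ∈ S' i, p j = ∑ j ∈ T', p j := by
    rw [hT', Finset.sum_biUnion]
    intro i _ i' _ hii'
    exact hS' i i' hii'
  -- total price of S equals total price of all items
  have hTfull : ∑ j ∈ T, p j = ∑ j : M, p j := by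
    rw [← Finset.sum_subset (Finset.subset_univ T)]
    intro j _ hj
    apply hfree
    intro i hji
    exact hj (Finset.mem_biUnion.2 ⟨i, Finset.mem_univ i, hji⟩)
  have hT'le : ∑ j ∈ T', p j ≤ ∑ j : M, p j :=
    Finset.sum_le_sum_of_subset_of_nonneg (Finset.subset_univ T')
      (fun j _ _ => hp j)
  -- summing the equilibrium inequalities at X = S' i
  have hkey : ∀ i, v i (S' i) - ∑ j ∈ S' i, p j ≤ v i (S i) - ∑ j ∈ S i, p j :=
    fun i => hmax i (S' i)
  have hsumle : ∑ i, (v i (S' i) - ∑ j ∈ S' i, p j)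
      ≤ ∑ i, (v i (S i) - ∑ j ∈ S i, p j) :=
    Finset.sum_le_sum fun i _ => hkey i
  have hprices : ∑ j ∈ T, p j ≤ ∑ j ∈ T', p j := by
    have h1 : ∑ i, (v i (S' i) - ∑ j ∈ S' i, p j)
        = ∑ i, v i (S' i) - ∑ j ∈ T', p j := by
      rw [Finset.sum_sub_distrib, hsumS']
    have h2 : ∑ i, (v i (S i) - ∑ j ∈ S i, p j)
        = ∑ i, v i (S i) - ∑ j ∈ T, p j := by
      rw [Finset.sum_sub_distrib, hsumS]
    rw [h1, h2, hsw] at hsumle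
    linarith
  have heqT' : ∑ j ∈ T', p j = ∑ j : M, p j := le_antisymm hT'le (hTfull ▸ hprices)
  -- all the inequalities in hsumle are equalities
  have hsums_eq : ∑ i, (v i (S' i) - ∑ j ∈ S' i, p j)
      = ∑ i, (v i (S i) - ∑ j ∈ S i, p j) := by
    rw [Finset.sum_sub_distrib, Finset.sum_sub_distrib, hsumS, hsumS', hsw, heqT', hTfull]
  have heach : ∀ i, v i (S' i) - ∑ j ∈ S' i, p j = v i (S i) - ∑ j ∈ S i, p j := by
    intro i
    have := (Finset.sum_eq_sum_iff_of_le (fun i _ => hkey i)).1 hsums_eq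
    exact this i (Finset.mem_univ i)
  constructor
  · intro i X
    calc v i X - ∑ j ∈ X, p j ≤ v i (S i) - ∑ j ∈ S i, p j := hmax i X
      _ = v i (S' i) - ∑ j ∈ S' i, p j := (heach i).symm
  · intro j hj
    have hjT' : j ∉ T' := fun h => by
      obtain ⟨i, _, hji⟩ := Finset.mem_biUnion.1 h
      exact hj i hji
    have hzero : ∑ j ∈ Finset.univ \ T', p j = 0 := by
      have := Finset.sum_sdiff (f := p) (Finset.subset_univ T')
      rw [heqT'] at this
      linarith [this]
    have := (Finset.sum_eq_zero_iff_of_nonneg (fun j _ => hp j)).1 hzero j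
      (Finset.mem_sdiff.2 ⟨Finset.mem_univ j, hjT'⟩)
    exact this
end

section
/- Let S* be any fixed welfare-maximizing allocation of a market with finite agent set N and finite item set M. Then the market possesses a Walrasian equilibrium if and only if there exists a pricing p such that (S*, p) is a Walrasian equilibrium. (This justifies decomposing the problem of finding a Walrasian equilibrium into first finding an optimal allocation and then finding supporting prices for it.) -/
/-- Fix any welfare-maximizing allocation `S*`. Then the market possesses a Walrasian
equilibrium if and only if there exists a pricing `p` such that `(S*, p)` is a
Walrasian equilibrium. -/
theorem walrasian_decomposition {N M : Type*} [Fintype N] [Fintype M] [DecidableEq M]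
    (v : N → Finset M → ℝ)
    (hnorm : ∀ i, v i ∅ = 0) (hnonneg : ∀ i X, 0 ≤ v i X)
    -- `S*` is an allocation ...
    (Sstar : N → Finset M) (hSstar : ∀ i i', i ≠ i' → Disjoint (Sstar i) (Sstar i'))
    -- ... which is welfare-maximizing
    (hopt : ∀ S' : N → Finset M, (∀ i i', i ≠ i' → Disjoint (S' i) (S' i')) →
      ∑ i, v i (S' i) ≤ ∑ i, v i (Sstar i)) :
    -- the market has a Walrasian equilibrium
    (∃ (S : N → Finset M) (p : M → ℝ),
        (∀ i i', i ≠ i' → Disjoint (S i) (S i')) ∧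
        (∀ j, 0 ≤ p j) ∧
        (∀ i (X : Finset M), v i X - ∑ j ∈ X, p j ≤ v i (S i) - ∑ j ∈ S i, p j) ∧
        (∀ j : M, (∀ i, j ∉ S i) → p j = 0)) ↔
    -- iff some pricing supports `S*`
    (∃ p : M → ℝ,
        (∀ j, 0 ≤ p j) ∧
        (∀ i (X : Finset M),
          v i X - ∑ j ∈ X, p j ≤ v i (Sstar i) - ∑ j ∈ Sstar i, p j) ∧
        (∀ j : M, (∀ i, j ∉ Sstar i) → p j = 0)) := by
  constructor
  · rintro ⟨S, p, hdisj, hp, henvy, hzero⟩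
    set U : Finset M := Finset.univ.biUnion S with hU
    set Us : Finset M := Finset.univ.biUnion Sstar with hUs
    have hsumS : ∑ i, ∑ j ∈ S i, p j = ∑ j ∈ U, p j :=
      (Finset.sum_biUnion (fun i _ i' _ h => hdisj i i' h)).symm
    have hsumSs : ∑ i, ∑ j ∈ Sstar i, p j = ∑ j ∈ Us, p j :=
      (Finset.sum_biUnion (fun i _ i' _ h => hSstar i i' h)).symm
    have hUfull : ∑ j ∈ U, p j = ∑ j, p j := by
      refine Finset.sum_subset (Finset.subset_univ _) (fun j _ hj => ?_)
      exact hzero j (fun i hji => hj (Finset.mem_biUnion.mpr ⟨i, Finset.mem_univ i, hji⟩))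
    have hUsle : ∑ j ∈ Us, p j ≤ ∑ j, p j :=
      Finset.sum_le_sum_of_subset_of_nonneg (Finset.subset_univ _) (fun j _ _ => hp j)
    have hsw : ∑ i, v i (S i) ≤ ∑ i, v i (Sstar i) := hopt S hdisj
    have hterm : ∀ i ∈ Finset.univ (α := N),
        0 ≤ (v i (S i) - ∑ j ∈ S i, p j) - (v i (Sstar i) - ∑ j ∈ Sstar i, p j) := by
      intro i _
      have := henvy i (Sstar i)
      linarith
    have hsumsplit : ∑ i, ((v i (S i) - ∑ j ∈ S i, p j) - (v i (Sstar i) - ∑ j ∈ Sstar i, p j))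
        = (∑ i, v i (S i) - ∑ i, ∑ j ∈ S i, p j)
          - (∑ i, v i (Sstar i) - ∑ i, ∑ j ∈ Sstar i, p j) := by
      rw [← Finset.sum_sub_distrib, ← Finset.sum_sub_distrib, ← Finset.sum_sub_distrib]
    have hsumle : ∑ i, ((v i (S i) - ∑ j ∈ S i, p j)
        - (v i (Sstar i) - ∑ j ∈ Sstar i, p j)) ≤ 0 := by
      rw [hsumsplit, hsumS, hsumSs, hUfull]
      linarith
    have hsumge : 0 ≤ ∑ i, ((v i (S i) - ∑ j ∈ S i, p j)
        - (v i (Sstar i) - ∑ j ∈ Sstar i, p j)) := Finset.sum_nonneg hterm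
    have hsum0 : ∑ i, ((v i (S i) - ∑ j ∈ S i, p j)
        - (v i (Sstar i) - ∑ j ∈ Sstar i, p j)) = 0 := le_antisymm hsumle hsumge
    have hterm0 : ∀ i, (v i (S i) - ∑ j ∈ S i, p j)
        - (v i (Sstar i) - ∑ j ∈ Sstar i, p j) = 0 := by
      intro i
      exact (Finset.sum_eq_zero_iff_of_nonneg hterm).mp hsum0 i (Finset.mem_univ i)
    have hUseq : ∑ j ∈ Us, p j = ∑ j, p j := by
      have := hsum0
      rw [hsumsplit, hsumS, hsumSs, hUfull] at this
      linarith
    refine ⟨p, hp, fun i X => ?_, fun j hj => ?_⟩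
    · have h1 := henvy i X
      have h2 := hterm0 i
      linarith
    · have hdiff : ∑ j ∈ Finset.univ \ Us, p j = 0 := by
        have := Finset.sum_sdiff_eq_sub (Finset.subset_univ Us) (f := p)
        rw [this, hUseq]
        ring
      have hjmem : j ∈ Finset.univ \ Us := by
        rw [Finset.mem_sdiff]
        refine ⟨Finset.mem_univ j, fun hmem => ?_⟩
        obtain ⟨i, _, hji⟩ := Finset.mem_biUnion.mp hmem
        exact hj i hji
      exact (Finset.sum_eq_zero_iff_of_nonneg (fun j _ => hp j)).mp hdiff j hjmem
  · rintro ⟨p, hp, henvy, hzero⟩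
    exact ⟨Sstar, p, hSstar, hp, henvy, hzero⟩
end

section
/- (Correctness of the reduction in Theorem 3.) Let X, Y, Z be finite sets with |X| = |Y| = |Z|, and let S be a finite set of triples in X × Y × Z such that every element of X ∪ Y ∪ Z occurs in at most three triples of S and any two distinct triples of S agree in at most one coordinate. Form a market whose agents are the elements of X and whose items are the elements of Y ⊎ Z, where the valuation of agent x for a bundle T ⊆ Y ⊎ Z is v_x(T) = max over triples (x, y, z) ∈ S of (𝟙[y ∈ T] + 𝟙[z ∈ T]) (and v_x(T) = 0 if x occurs in no triple of S). Then there exists an allocation (a family (T_x)_{x∈X} of pairwise disjoint subsets of Y ⊎ Z) with ∑_{x∈X} v_x(T_x) ≥ 2|X| if and only if there exists a subset S' ⊆ S with |S'| = |X| whose triples are pairwise disjoint in every coordinate (i.e., a three-dimensional perfect matching). -/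
/-- **Correctness of the reduction from 3-bounded 3-dimensional matching.**
Given finite sets `X, Y, Z` of equal cardinality and a set `S` of triples in which every
element occurs in at most three triples and any two distinct triples agree in at most one
coordinate, the market with agents `X`, items `Y ⊕ Z`, and valuations
`v_x(T) = max_{(x,y,z) ∈ S} (𝟙[inl y ∈ T] + 𝟙[inr z ∈ T])` admits an allocation of social
welfare at least `2|X|` iff `S` contains `|X|` triples that are pairwise disjoint in every
coordinate. -/
theorem threeDM_reduction_correct {X Y Z : Type*}
    [Fintype X] [Fintype Y] [Fintype Z]
    [DecidableEq X] [DecidableEq Y] [DecidableEq Z]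
    (hXY : Fintype.card X = Fintype.card Y) (hXZ : Fintype.card X = Fintype.card Z)
    (S : Finset (X × Y × Z))
    -- every element occurs in at most three triples of `S`
    (hx : ∀ x : X, (S.filter (fun s => s.1 = x)).card ≤ 3)
    (hy : ∀ y : Y, (S.filter (fun s => s.2.1 = y)).card ≤ 3)
    (hz : ∀ z : Z, (S.filter (fun s => s.2.2 = z)).card ≤ 3)
    -- any two distinct triples of `S` agree in at most one coordinate
    (hshare : ∀ s ∈ S, ∀ t ∈ S, s ≠ t →
      ¬(s.1 = t.1 ∧ s.2.1 = t.2.1) ∧ ¬(s.1 = t.1 ∧ s.2.2 = t.2.2) ∧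
      ¬(s.2.1 = t.2.1 ∧ s.2.2 = t.2.2)) :
    -- there is an allocation of social welfare at least `2|X|` ...
    (∃ T : X → Finset (Y ⊕ Z),
      (∀ x x', x ≠ x' → Disjoint (T x) (T x')) ∧
      2 * Fintype.card X ≤
        ∑ x : X, (S.filter (fun s => s.1 = x)).sup
          (fun s => (if Sum.inl s.2.1 ∈ T x then 1 else 0) +
                    (if Sum.inr s.2.2 ∈ T x then 1 else 0))) ↔
    -- ... iff there is a three-dimensional perfect matching inside `S`
    (∃ S' ⊆ S, S'.card = Fintype.card X ∧
      ∀ s ∈ S', ∀ t ∈ S', s ≠ t →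
        s.1 ≠ t.1 ∧ s.2.1 ≠ t.2.1 ∧ s.2.2 ≠ t.2.2) := by
  constructor
  · rintro ⟨T, hdisj, hsum⟩
    -- each summand is at most 2
    set f : X → ℕ := fun x => (S.filter (fun s => s.1 = x)).sup
          (fun s => (if Sum.inl s.2.1 ∈ T x then 1 else 0) +
                    (if Sum.inr s.2.2 ∈ T x then 1 else 0)) with hf
    have hle : ∀ x, f x ≤ 2 := by
      intro x
      apply Finset.sup_le
      intro s _
      split_ifs <;> omega
    have hsum2 : ∑ x : X, f x = ∑ x : X, 2 := by
      have h1 : ∑ x : X, f x ≤ ∑ x : X, 2 := Finset.sum_le_sum fun x _ => hle x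
      have h2 : (∑ x : X, 2) = 2 * Fintype.card X := by
        simp [Finset.sum_const, mul_comm]
      exact le_antisymm h1 (by rw [h2]; exact hsum)
    have heach : ∀ x, f x = 2 := by
      intro x
      have := (Finset.sum_eq_sum_iff_of_le (fun i _ => hle i)).mp hsum2 x (Finset.mem_univ x)
      omega
    -- for each x there is a triple achieving value 2
    have hex : ∀ x : X, ∃ s ∈ S, s.1 = x ∧ Sum.inl s.2.1 ∈ T x ∧ Sum.inr s.2.2 ∈ T x := by
      intro x
      by_contra hcon
      push_neg at hcon
      have : f x ≤ 1 := by
        apply Finset.sup_le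
        intro s hs
        rw [Finset.mem_filter] at hs
        rcases hs with ⟨hsS, hsx⟩
        have := hcon s hsS hsx
        split_ifs with h1 h2 h2 <;> simp_all <;> omega
      have := heach x
      omega
    choose g hgS hg1 hgy hgz using hex
    have ginj : Function.Injective g := by
      intro a b hab
      have := hg1 a
      rw [hab, hg1 b] at this
      exact this.symm
    refine ⟨Finset.univ.image g, ?_, ?_, ?_⟩
    · intro s hs
      rw [Finset.mem_image] at hs
      rcases hs with ⟨a, _, rfl⟩
      exact hgS a
    · rw [Finset.card_image_of_injective _ ginj, Finset.card_univ]
    · intro s hs t ht hst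
      rw [Finset.mem_image] at hs ht
      rcases hs with ⟨a, _, rfl⟩
      rcases ht with ⟨b, _, rfl⟩
      have hab : a ≠ b := fun h => hst (by rw [h])
      refine ⟨by rw [hg1 a, hg1 b]; exact hab, ?_, ?_⟩
      · intro hyy
        have h1 := hgy a
        have h2 := hgy b
        rw [hyy] at h1
        exact (Finset.disjoint_left.mp (hdisj a b hab) h1) h2
      · intro hzz
        have h1 := hgz a
        have h2 := hgz b
        rw [hzz] at h1
        exact (Finset.disjoint_left.mp (hdisj a b hab) h1) h2
  · rintro ⟨S', hS'S, hcard, hmatch⟩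
    -- each x has a unique triple in S'
    have hinjOn : Set.InjOn (fun s : X × Y × Z => s.1) S' := by
      intro s hs t ht h
      by_contra hne
      exact (hmatch s hs t ht hne).1 h
    have himg : S'.image (fun s => s.1) = Finset.univ := by
      apply Finset.eq_univ_of_card
      rw [Finset.card_image_of_injOn hinjOn, hcard]
    have hex : ∀ x : X, ∃ s ∈ S', s.1 = x := by
      intro x
      have : x ∈ S'.image (fun s => s.1) := by rw [himg]; exact Finset.mem_univ x
      rw [Finset.mem_image] at this
      rcases this with ⟨s, hs, h⟩
      exact ⟨s, hs, h⟩
    choose g hgS' hg1 using hex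
    refine ⟨fun x => {Sum.inl (g x).2.1, Sum.inr (g x).2.2}, ?_, ?_⟩
    · intro a b hab
      have hgne : g a ≠ g b := by
        intro h
        apply hab
        rw [← hg1 a, h, hg1 b]
      have hm := hmatch (g a) (hgS' a) (g b) (hgS' b) hgne
      rw [Finset.disjoint_left]
      intro u hu hu'
      simp only [Finset.mem_insert, Finset.mem_singleton] at hu hu'
      rcases hu with rfl | rfl
      · rcases hu' with h | h
        · exact hm.2.1 (Sum.inl.inj h)
        · exact Sum.inl_ne_inr h
      · rcases hu' with h | h
        · exact Sum.inr_ne_inl h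
        · exact hm.2.2 (Sum.inr.inj h)
    · have : ∀ x : X, 2 ≤ (S.filter (fun s => s.1 = x)).sup
          (fun s => (if Sum.inl s.2.1 ∈ ({Sum.inl (g x).2.1, Sum.inr (g x).2.2} : Finset (Y ⊕ Z)) then 1 else 0) +
                    (if Sum.inr s.2.2 ∈ ({Sum.inl (g x).2.1, Sum.inr (g x).2.2} : Finset (Y ⊕ Z)) then 1 else 0)) := by
        intro x
        have hmem : g x ∈ S.filter (fun s => s.1 = x) :=
          Finset.mem_filter.mpr ⟨hS'S (hgS' x), hg1 x⟩
        have hm1 : Sum.inl (g x).2.1 ∈ ({Sum.inl (g x).2.1, Sum.inr (g x).2.2} : Finset (Y ⊕ Z)) :=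
          Finset.mem_insert_self _ _
        have hm2 : Sum.inr (g x).2.2 ∈ ({Sum.inl (g x).2.1, Sum.inr (g x).2.2} : Finset (Y ⊕ Z)) :=
          Finset.mem_insert.mpr (Or.inr (Finset.mem_singleton_self _))
        have hle := Finset.le_sup
          (f := fun s : X × Y × Z =>
            (if Sum.inl s.2.1 ∈ ({Sum.inl (g x).2.1, Sum.inr (g x).2.2} : Finset (Y ⊕ Z)) then 1 else 0) +
            (if Sum.inr s.2.2 ∈ ({Sum.inl (g x).2.1, Sum.inr (g x).2.2} : Finset (Y ⊕ Z)) then 1 else 0))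
          hmem
        simp only [if_pos hm1, if_pos hm2] at hle
        omega
      calc 2 * Fintype.card X = ∑ _x : X, 2 := by simp [mul_comm]
        _ ≤ _ := Finset.sum_le_sum fun x _ => this x
end

section
/- (Correctness of the reduction in Theorem 5.) Let n ≥ 1 and B ≥ 1 be integers, and let a_1, …, a_{3n} be positive integers with ∑_{i=1}^{3n} a_i = n·B. Consider a market with n agents and 3n items in which every agent has the identical 3-demand budget-additive valuation v(T) = max over subsets T' ⊆ T with |T'| ≤ 3 of min(B, ∑_{i∈T'} a_i). Then there exists an allocation (pairwise disjoint bundles (S_1, …, S_n) of items) with ∑_{i=1}^{n} v(S_i) ≥ n·B if and only if the multiset {a_1, …, a_{3n}} can be partitioned into n triples, each summing to exactly B; moreover, in the forward direction any such welfare-n·B allocation gives each agent value exactly B. -/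
/-- The identical 3-demand budget-additive valuation of the reduction: the value of a
bundle `T` is the maximum over sub-bundles `T' ⊆ T` with `|T'| ≤ 3` of
`min (B, ∑_{i ∈ T'} a i)`. -/
def budgetVal3 (B : ℕ) {m : ℕ} (a : Fin m → ℕ) (T : Finset (Fin m)) : ℕ :=
  (T.powerset.filter (fun T' => T'.card ≤ 3)).sup (fun T' => min B (∑ i ∈ T', a i))

lemma budgetVal3_le (B : ℕ) {m : ℕ} (a : Fin m → ℕ) (T : Finset (Fin m)) :
    budgetVal3 B a T ≤ B :=
  Finset.sup_le fun _ _ => min_le_left _ _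

lemma le_budgetVal3 (B : ℕ) {m : ℕ} (a : Fin m → ℕ) {T T' : Finset (Fin m)}
    (h1 : T' ⊆ T) (h2 : T'.card ≤ 3) :
    min B (∑ i ∈ T', a i) ≤ budgetVal3 B a T := by
  unfold budgetVal3
  exact Finset.le_sup (f := fun T' => min B (∑ i ∈ T', a i))
    (Finset.mem_filter.mpr ⟨Finset.mem_powerset.mpr h1, h2⟩)

lemma all_eq_of_le_of_sum_ge {n B : ℕ} (f : Fin n → ℕ) (hle : ∀ i, f i ≤ B)
    (h : n * B ≤ ∑ i, f i) : ∀ i, f i = B := by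
  have h2 : ∑ _i : Fin n, B = n * B := by
    simp [Finset.sum_const, Finset.card_univ, mul_comm]
  have h1 : ∑ i, f i ≤ ∑ _i : Fin n, B := by
    rw [h2]
    calc ∑ i, f i ≤ ∑ _i : Fin n, B := Finset.sum_le_sum (fun i _ => hle i)
    _ = n * B := h2
  have heq : ∑ i, f i = ∑ _i : Fin n, B := le_antisymm h1 (by omega)
  have := (Finset.sum_eq_sum_iff_of_le (fun i _ => hle i)).mp heq
  exact fun i => this i (Finset.mem_univ i)

lemma all_eq_of_ge_of_sum_le {n B : ℕ} (f : Fin n → ℕ) (hge : ∀ i, B ≤ f i)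
    (h : ∑ i, f i ≤ n * B) : ∀ i, f i = B := by
  have h2 : ∑ _i : Fin n, B = n * B := by
    simp [Finset.sum_const, Finset.card_univ, mul_comm]
  have heq : ∑ _i : Fin n, B = ∑ i, f i := by
    refine le_antisymm ?_ (by omega)
    exact Finset.sum_le_sum (fun i _ => hge i)
  have := (Finset.sum_eq_sum_iff_of_le (fun i _ => hge i)).mp heq
  exact fun i => ((this i (Finset.mem_univ i)).symm)

/-- **Correctness of the reduction from 3-partition.** For positive integers
`a_1, …, a_{3n}` summing to `n·B`, the market with `n` agents, `3n` items and identical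
3-demand budget-additive valuations admits an allocation of social welfare at least `n·B`
iff the numbers can be partitioned into `n` triples each summing to `B`; moreover any such
welfare-`n·B` allocation gives every agent value exactly `B`. -/
theorem three_partition_reduction_correct (n B : ℕ) (hn : 1 ≤ n) (hB : 1 ≤ B)
    (a : Fin (3 * n) → ℕ) (ha : ∀ i, 0 < a i) (hsum : ∑ i, a i = n * B) :
    ((∃ S : Fin n → Finset (Fin (3 * n)),
        (∀ i j, i ≠ j → Disjoint (S i) (S j)) ∧
        n * B ≤ ∑ i, budgetVal3 B a (S i)) ↔
      (∃ P : Fin n → Finset (Fin (3 * n)),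
        (∀ i j, i ≠ j → Disjoint (P i) (P j)) ∧
        ∀ i, (P i).card = 3 ∧ ∑ x ∈ P i, a x = B)) ∧
    (∀ S : Fin n → Finset (Fin (3 * n)),
      (∀ i j, i ≠ j → Disjoint (S i) (S j)) →
      n * B ≤ ∑ i, budgetVal3 B a (S i) →
      ∀ i, budgetVal3 B a (S i) = B) := by
  have key : ∀ S : Fin n → Finset (Fin (3 * n)),
      (∀ i j, i ≠ j → Disjoint (S i) (S j)) →
      n * B ≤ ∑ i, budgetVal3 B a (S i) →
      ∀ i, budgetVal3 B a (S i) = B := by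
    intro S _ hge
    exact all_eq_of_le_of_sum_ge _ (fun j => budgetVal3_le B a (S j)) hge
  refine ⟨⟨?_, ?_⟩, key⟩
  · rintro ⟨S, hdisj, hge⟩
    have hval : ∀ i, budgetVal3 B a (S i) = B := key S hdisj hge
    -- extract the maximizing sub-bundles
    have hne : ∀ i : Fin n, ((S i).powerset.filter (fun T' => T'.card ≤ 3)).Nonempty :=
      fun i => ⟨∅, by simp⟩
    choose T hTmem hTeq using fun i =>
      Finset.exists_mem_eq_sup ((S i).powerset.filter (fun T' => T'.card ≤ 3)) (hne i)
        (fun T' => min B (∑ x ∈ T', a x))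
    have hTsub : ∀ i, T i ⊆ S i := fun i =>
      Finset.mem_powerset.mp (Finset.mem_filter.mp (hTmem i)).1
    have hTcard : ∀ i, (T i).card ≤ 3 := fun i => (Finset.mem_filter.mp (hTmem i)).2
    have hTge : ∀ i, B ≤ ∑ x ∈ T i, a x := by
      intro i
      have : min B (∑ x ∈ T i, a x) = B := by rw [← hTeq i]; exact hval i
      omega
    have hTdisj : ∀ i j, i ≠ j → Disjoint (T i) (T j) := fun i j hij =>
      (hdisj i j hij).mono (hTsub i) (hTsub j)
    have hpd : ((Finset.univ : Finset (Fin n)) : Set (Fin n)).PairwiseDisjoint T := by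
      intro i _ j _ hij; exact hTdisj i j hij
    set U : Finset (Fin (3 * n)) := Finset.univ.biUnion T with hU
    have hsumU : ∑ x ∈ U, a x = ∑ i, ∑ x ∈ T i, a x := Finset.sum_biUnion hpd
    have hUle : ∑ x ∈ U, a x ≤ n * B := by
      rw [← hsum]
      exact Finset.sum_le_sum_of_subset (Finset.subset_univ U)
    have hTsum : ∀ i, ∑ x ∈ T i, a x = B :=
      all_eq_of_ge_of_sum_le _ hTge (by omega)
    -- U = univ
    have hUsum : ∑ x ∈ U, a x = n * B := by
      rw [hsumU]; simp [hTsum, Finset.sum_const, Finset.card_univ, mul_comm]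
    have hUuniv : U = Finset.univ := by
      by_contra hUne
      obtain ⟨x, hxuniv, hxU⟩ := Finset.exists_of_ssubset
        (Finset.ssubset_iff_subset_ne.mpr ⟨Finset.subset_univ U, hUne⟩)
      have : ∑ y ∈ U, a y < ∑ y, a y :=
        Finset.sum_lt_sum_of_subset (Finset.subset_univ U) hxuniv hxU (ha x)
          (fun _ _ _ => Nat.zero_le _)
      omega
    have hcardU : ∑ i, (T i).card = 3 * n := by
      have := Finset.card_biUnion (s := (Finset.univ : Finset (Fin n))) (t := T)
        (fun i _ j _ hij => hTdisj i j hij)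
      rw [← hU, hUuniv] at this
      simpa using this.symm
    have hTcard3 : ∀ i, (T i).card = 3 :=
      all_eq_of_le_of_sum_ge (fun i => (T i).card) hTcard (by simpa [mul_comm] using hcardU.ge)
    exact ⟨T, hTdisj, fun i => ⟨hTcard3 i, hTsum i⟩⟩
  · rintro ⟨P, hdisj, hP⟩
    refine ⟨P, hdisj, ?_⟩
    have : ∀ i, B ≤ budgetVal3 B a (P i) := by
      intro i
      have := le_budgetVal3 B a (Finset.Subset.refl (P i)) (le_of_eq (hP i).1)
      rw [(hP i).2] at this
      simpa using this
    calc n * B = ∑ _i : Fin n, B := by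
          simp [Finset.sum_const, Finset.card_univ, mul_comm]
      _ ≤ ∑ i, budgetVal3 B a (P i) := Finset.sum_le_sum (fun i _ => this i)
end

section
/- (Existence of Walrasian equilibria in unit-demand markets.) Let N be a finite set of agents, M a finite set of items, and for each i ∈ N and j ∈ M let v_{ij} ≥ 0, with each agent i having the unit-demand valuation v_i(T) = max_{j∈T} v_{ij} (and v_i(∅) = 0). Then a Walrasian equilibrium exists: there are an allocation S and a pricing p such that (S, p) is a Walrasian equilibrium. -/
open Finset

/-- Auxiliary "alternating orbit" used to combine two matchings
(a functional replacement for alternating paths). -/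
inductive MDOrbit {N M : Type*} (σ : N → Option M) (τ : M → Option N) (r : M) : N → Prop
  | base (i : N) : τ r = some i → MDOrbit σ τ r i
  | step (i i' : N) (j : M) : MDOrbit σ τ r i → σ i = some j → τ j = some i' →
      MDOrbit σ τ r i'

theorem MDOrbit.key {N M : Type*} {σ : N → Option M} {τ : M → Option N} {r : M} {i : N}
    (h : MDOrbit σ τ r i) :
    ∃ j, τ j = some i ∧ (j = r ∨ ∃ i₀, MDOrbit σ τ r i₀ ∧ σ i₀ = some j) := by
  cases h with
  | base i h => exact ⟨r, h, Or.inl rfl⟩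
  | step i i' j h1 h2 h3 => exact ⟨j, h3, Or.inr ⟨i, h1, h2⟩⟩

/-- One augmentation step (Mendelsohn–Dulmage style): if `r` is matched by `τ` but not
covered by the matching `σ`, we can modify `σ` so that it covers `r`, still covers
everything it covered before on the agent side, and covers every `τ`-matched item it
covered before. -/
theorem md_step {N M : Type*} (E : N → M → Prop) (σ : N → Option M) (τ : M → Option N)
    (hσm : ∀ i i' j, σ i = some j → σ i' = some j → i = i')
    (hτm : ∀ j j' i, τ j = some i → τ j' = some i → j = j')
    (hσE : ∀ i j, σ i = some j → E i j)
    (hτE : ∀ i j, τ j = some i → E i j)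
    (r : M) (hr : τ r ≠ none) (hru : ∀ i, σ i ≠ some r) :
    ∃ σ' : N → Option M,
      (∀ i i' j, σ' i = some j → σ' i' = some j → i = i') ∧
      (∀ i j, σ' i = some j → E i j) ∧
      (∀ i, σ i ≠ none → σ' i ≠ none) ∧
      (∃ i, σ' i = some r) ∧
      (∀ j, (∃ i, σ i = some j) → τ j ≠ none → ∃ i, σ' i = some j) := by
  classical
  set O : N → Prop := MDOrbit σ τ r with hOdef
  have keyfun : ∀ i, O i → ∃ j, τ j = some i := fun i h => (MDOrbit.key h).imp fun j hj => hj.1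
  set σ' : N → Option M :=
    fun i => if h : O i then some (Classical.choose (keyfun i h)) else σ i with hσ'def
  have hval : ∀ i (h : O i), τ (Classical.choose (keyfun i h)) = some i :=
    fun i h => Classical.choose_spec (keyfun i h)
  have hOiff : ∀ i j, O i → (σ' i = some j ↔ τ j = some i) := by
    intro i j h
    constructor
    · intro hj
      simp only [hσ'def, dif_pos h, Option.some.injEq] at hj
      exact hj ▸ hval i h
    · intro hj
      have h1 := hval i h
      have h2 : Classical.choose (keyfun i h) = j := hτm _ _ _ h1 hj
      simp [hσ'def, dif_pos h, h2]
  have hnotO : ∀ i, ¬ O i → σ' i = σ i := fun i h => by simp [hσ'def, dif_neg h]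
  -- crux: an O-agent and a non-O-agent cannot collide
  have crux : ∀ i i' j, O i → ¬ O i' → τ j = some i → σ i' = some j → False := by
    intro i i' j hOi hOi' hτj hσi'
    obtain ⟨j₀, hj₀, hcase⟩ := MDOrbit.key (hOdef ▸ hOi)
    have hjj₀ : j = j₀ := hτm _ _ _ hτj hj₀
    subst hjj₀
    rcases hcase with rfl | ⟨i₀, hOi₀, hσi₀⟩
    · exact hru i' hσi'
    · exact hOi' (by rw [hOdef]; exact (hσm _ _ _ hσi' hσi₀) ▸ hOi₀)
  refine ⟨σ', ?_, ?_, ?_, ?_, ?_⟩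
  · -- matching
    intro i i' j h1 h2
    by_cases hi : O i <;> by_cases hi' : O i'
    · have e1 := (hOiff i j hi).mp h1
      have e2 := (hOiff i' j hi').mp h2
      rw [e1] at e2; exact (Option.some.injEq _ _ ▸ e2)
    · rw [hnotO i' hi'] at h2
      exact absurd (crux i i' j hi hi' ((hOiff i j hi).mp h1) h2) (by simp)
    · rw [hnotO i hi] at h1
      exact absurd (crux i' i j hi' hi ((hOiff i' j hi').mp h2) h1) (by simp)
    · rw [hnotO i hi] at h1; rw [hnotO i' hi'] at h2
      exact hσm _ _ _ h1 h2
  · -- tight edges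
    intro i j h
    by_cases hi : O i
    · exact hτE i j ((hOiff i j hi).mp h)
    · exact hσE i j (by rwa [hnotO i hi] at h)
  · -- domain preserved
    intro i hi
    by_cases h : O i
    · simp [hσ'def, dif_pos h]
    · rwa [hnotO i h]
  · -- r covered
    obtain ⟨i₁, hi₁⟩ := Option.ne_none_iff_exists'.mp hr
    have hOi₁ : O i₁ := MDOrbit.base i₁ hi₁
    exact ⟨i₁, (hOiff i₁ r hOi₁).mpr hi₁⟩
  · -- τ-matched covered items remain covered
    intro j ⟨i, hi⟩ hτj
    by_cases hO : O i
    · obtain ⟨i₂, hi₂⟩ := Option.ne_none_iff_exists'.mp hτj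
      have hOi₂ : O i₂ := MDOrbit.step i i₂ j hO hi hi₂
      exact ⟨i₂, (hOiff i₂ j hOi₂).mpr hi₂⟩
    · exact ⟨i, by rwa [hnotO i hO]⟩

/-- Iterating `md_step`: a matching covering a prescribed agent set can be combined with
a matching covering a prescribed item set into a single matching covering both. -/
theorem md_iter {N M : Type*} [DecidableEq M] (E : N → M → Prop) (τ : M → Option N)
    (hτm : ∀ j j' i, τ j = some i → τ j' = some i → j = j')
    (hτE : ∀ i j, τ j = some i → E i j) :
    ∀ (n : ℕ) (P : Finset M), (∀ j ∈ P, τ j ≠ none) → P.card ≤ n →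
    ∀ (σ : N → Option M),
      (∀ i i' j, σ i = some j → σ i' = some j → i = i') →
      (∀ i j, σ i = some j → E i j) →
      ∃ σ' : N → Option M,
        (∀ i i' j, σ' i = some j → σ' i' = some j → i = i') ∧
        (∀ i j, σ' i = some j → E i j) ∧
        (∀ i, σ i ≠ none → σ' i ≠ none) ∧
        (∀ j ∈ P, ∃ i, σ' i = some j) := by
  intro n
  induction n with
  | zero =>
    intro P hP hcard σ hm hE
    have : P = ∅ := card_eq_zero.mp (Nat.le_zero.mp hcard)
    subst this
    exact ⟨σ, hm, hE, fun i hi => hi, by simp⟩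
  | succ n ih =>
    intro P hP hcard σ hm hE
    rcases P.eq_empty_or_nonempty with rfl | ⟨r, hr⟩
    · exact ⟨σ, hm, hE, fun i hi => hi, by simp⟩
    · have hcard' : (P.erase r).card ≤ n := by
        have := Finset.card_erase_of_mem hr
        omega
      obtain ⟨σ₁, hm₁, hE₁, hdom₁, hcov₁⟩ :=
        ih (P.erase r) (fun j hj => hP j (Finset.mem_of_mem_erase hj)) hcard' σ hm hE
      by_cases hrc : ∃ i, σ₁ i = some r
      · refine ⟨σ₁, hm₁, hE₁, hdom₁, ?_⟩
        intro j hj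
        by_cases hjr : j = r
        · exact hjr ▸ hrc
        · exact hcov₁ j (Finset.mem_erase.mpr ⟨hjr, hj⟩)
      · push_neg at hrc
        obtain ⟨σ₂, hm₂, hE₂, hdom₂, hrcov, hpres⟩ :=
          md_step E σ₁ τ hm₁ hτm hE₁ hτE r (hP r hr) hrc
        refine ⟨σ₂, hm₂, hE₂, fun i hi => hdom₂ i (hdom₁ i hi), ?_⟩
        intro j hj
        by_cases hjr : j = r
        · exact hjr ▸ hrcov
        · exact hpres j (hcov₁ j (Finset.mem_erase.mpr ⟨hjr, hj⟩))
            (hP j hj)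

/-- Summing a function over the items matched by a matching, expressed as a sum
over all items. -/
theorem matching_sum_eq {N M : Type*} [Fintype N] [Fintype M] [DecidableEq M] [DecidableEq N]
    (μ : N → Option M) (hμ : ∀ i i' j, μ i = some j → μ i' = some j → i = i')
    (g : M → ℝ) :
    ∑ i, (μ i).elim 0 g = ∑ j, if ∃ i, μ i = some j then g j else 0 := by
  classical
  have h1 : ∀ i, (μ i).elim 0 g = ∑ j, if μ i = some j then g j else 0 := by
    intro i
    cases hμi : μ i with
    | none => simp [hμi]
    | some j₀ =>
      simp only [hμi, Option.elim, Option.some.injEq]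
      rw [Finset.sum_ite_eq Finset.univ j₀ g]
      simp
  calc ∑ i, (μ i).elim 0 g = ∑ i, ∑ j, if μ i = some j then g j else 0 := by
        exact Finset.sum_congr rfl fun i _ => h1 i
    _ = ∑ j, ∑ i, if μ i = some j then g j else 0 := Finset.sum_comm
    _ = ∑ j, if ∃ i, μ i = some j then g j else 0 := by
        refine Finset.sum_congr rfl fun j _ => ?_
        by_cases hc : ∃ i, μ i = some j
        · obtain ⟨i₀, hi₀⟩ := hc
          rw [if_pos ⟨i₀, hi₀⟩, Finset.sum_eq_single i₀]
          · rw [if_pos hi₀]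
          · intro i' _ hne
            rw [if_neg]
            intro h
            exact hne (hμ _ _ _ h hi₀)
          · intro h; exact absurd (Finset.mem_univ i₀) h
        · rw [if_neg hc]
          exact Finset.sum_eq_zero fun i _ => if_neg fun h => hc ⟨i, h⟩

/-- Hall's condition for the tight graph at a minimizer of the dual objective:
agents with positive dual value can be injectively assigned tight items. -/
theorem hall_of_min {A I : Type*} [Fintype A] [Fintype I]
    (w : A → I → ℝ) (q : A → ℝ) (g : I → ℝ)
    (hq : ∀ a, 0 ≤ q a) (hg : ∀ i, 0 ≤ g i)
    (hfeas : ∀ a i, w a i ≤ q a + g i)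
    (hmin : ∀ (q' : A → ℝ) (g' : I → ℝ), (∀ a, 0 ≤ q' a) → (∀ i, 0 ≤ g' i) →
      (∀ a i, w a i ≤ q' a + g' i) → ∑ a, q a + ∑ i, g i ≤ ∑ a, q' a + ∑ i, g' i) :
    ∃ f : {a : A // 0 < q a} → I, Function.Injective f ∧
      ∀ x, q x.1 + g (f x) ≤ w x.1 (f x) := by
  classical
  set t : {a : A // 0 < q a} → Finset I :=
    fun x => univ.filter fun i => q x.1 + g i ≤ w x.1 i with htdef
  have hall : ∀ s : Finset {a : A // 0 < q a}, s.card ≤ (s.biUnion t).card := by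
    by_contra hcon
    push_neg at hcon
    obtain ⟨s, hs⟩ := hcon
    set A' : Finset A := s.image Subtype.val with hA'def
    set B' : Finset I := s.biUnion t with hB'def
    have hA'card : A'.card = s.card := Finset.card_image_of_injective _ Subtype.val_injective
    have hA'ne : A'.Nonempty := by
      rw [← Finset.card_pos, hA'card]
      exact lt_of_le_of_lt (Nat.zero_le _) hs
    have hA'pos : ∀ a ∈ A', 0 < q a := by
      intro a ha
      obtain ⟨x, _, rfl⟩ := Finset.mem_image.mp ha
      exact x.2
    have hslack : ∀ a ∈ A', ∀ i, i ∉ B' → w a i < q a + g i := by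
      intro a ha i hi
      obtain ⟨x, hx, rfl⟩ := Finset.mem_image.mp ha
      by_contra hcon2
      push_neg at hcon2
      exact hi (Finset.mem_biUnion.mpr ⟨x, hx, Finset.mem_filter.mpr ⟨mem_univ _, hcon2⟩⟩)
    set εs : Finset ℝ :=
      A'.image q ∪ (A' ×ˢ (univ \ B')).image (fun z => q z.1 + g z.2 - w z.1 z.2) with hεsdef
    have hεsne : εs.Nonempty := Finset.Nonempty.mono Finset.subset_union_left (hA'ne.image q)
    set ε : ℝ := εs.min' hεsne with hεdef
    have hεmem := εs.min'_mem hεsne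
    have hεpos : 0 < ε := by
      have hall_pos : ∀ z ∈ εs, 0 < z := by
        intro z hz
        rcases Finset.mem_union.mp hz with hz | hz
        · obtain ⟨a, ha, rfl⟩ := Finset.mem_image.mp hz
          exact hA'pos a ha
        · obtain ⟨⟨a, i⟩, hai, rfl⟩ := Finset.mem_image.mp hz
          obtain ⟨ha, hi⟩ := Finset.mem_product.mp hai
          have := hslack a ha i (Finset.mem_sdiff.mp hi).2
          simp only [sub_pos]
          linarith
      exact hall_pos ε hεmem
    have hεq : ∀ a ∈ A', ε ≤ q a := fun a ha =>
      Finset.min'_le _ _ (Finset.mem_union_left _ (Finset.mem_image_of_mem q ha))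
    have hεsl : ∀ a ∈ A', ∀ i, i ∉ B' → ε ≤ q a + g i - w a i := by
      intro a ha i hi
      have hmem : (a, i) ∈ A' ×ˢ (univ \ B') :=
        Finset.mem_product.mpr ⟨ha, Finset.mem_sdiff.mpr ⟨mem_univ _, hi⟩⟩
      exact Finset.min'_le εs _ (Finset.mem_union_right _
        (Finset.mem_image_of_mem (fun z => q z.1 + g z.2 - w z.1 z.2) hmem))
    set q' : A → ℝ := fun a => q a - if a ∈ A' then ε else 0 with hq'def
    set g' : I → ℝ := fun i => g i + if i ∈ B' then ε else 0 with hg'def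
    have h1 : ∀ a, 0 ≤ q' a := by
      intro a
      by_cases ha : a ∈ A'
      · simp only [hq'def, if_pos ha]
        linarith [hεq a ha]
      · simp only [hq'def, if_neg ha]
        linarith [hq a]
    have h2 : ∀ i, 0 ≤ g' i := by
      intro i
      by_cases hi : i ∈ B'
      · simp only [hg'def, if_pos hi]
        linarith [hg i]
      · simp only [hg'def, if_neg hi]
        linarith [hg i]
    have h3 : ∀ a i, w a i ≤ q' a + g' i := by
      intro a i
      by_cases ha : a ∈ A'
      · by_cases hi : i ∈ B'
        · simp only [hq'def, hg'def, if_pos ha, if_pos hi]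
          linarith [hfeas a i]
        · simp only [hq'def, hg'def, if_pos ha, if_neg hi]
          linarith [hεsl a ha i hi]
      · by_cases hi : i ∈ B'
        · simp only [hq'def, hg'def, if_neg ha, if_pos hi]
          linarith [hfeas a i]
        · simp only [hq'def, hg'def, if_neg ha, if_neg hi]
          linarith [hfeas a i]
    have hsum : ∑ a, q' a + ∑ i, g' i =
        (∑ a, q a + ∑ i, g i) - ε * A'.card + ε * B'.card := by
      have e1 : ∑ a, q' a = ∑ a, q a - ε * A'.card := by
        simp only [hq'def]
        rw [Finset.sum_sub_distrib]
        congr 1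
        rw [Finset.sum_ite_mem, Finset.univ_inter, Finset.sum_const, nsmul_eq_mul, mul_comm]
      have e2 : ∑ i, g' i = ∑ i, g i + ε * B'.card := by
        simp only [hg'def]
        rw [Finset.sum_add_distrib]
        congr 1
        rw [Finset.sum_ite_mem, Finset.univ_inter, Finset.sum_const, nsmul_eq_mul, mul_comm]
      rw [e1, e2]; ring
    have hlt : ∑ a, q' a + ∑ i, g' i < ∑ a, q a + ∑ i, g i := by
      rw [hsum]
      have hnat : B'.card < A'.card := by rw [hA'card]; exact hs
      have hcard : (B'.card : ℝ) < (A'.card : ℝ) := by exact_mod_cast hnat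
      have := mul_lt_mul_of_pos_left hcard hεpos
      linarith
    exact absurd (hmin q' g' h1 h2 h3) (not_le.mpr hlt)
  obtain ⟨f, hfinj, hft⟩ := (Finset.all_card_le_biUnion_card_iff_exists_injective t).mp hall
  exact ⟨f, hfinj, fun x => (Finset.mem_filter.mp (hft x)).2⟩

/-- **Existence of Walrasian equilibria in unit-demand markets.** If every agent `i` has
the unit-demand valuation `v i T = max_{j ∈ T} vv i j` (with `v i ∅ = 0`) given by
nonnegative values `vv`, then there exist an allocation `S` and a nonnegative pricing `p`
forming a Walrasian equilibrium. -/
theorem unit_demand_walrasian_exists {N M : Type*}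
    [Fintype N] [Fintype M] [DecidableEq M]
    (vv : N → M → ℝ) (hvv : ∀ i j, 0 ≤ vv i j)
    (v : N → Finset M → ℝ)
    (hv0 : ∀ i, v i ∅ = 0)
    (hv : ∀ i (T : Finset M) (h : T.Nonempty), v i T = T.sup' h (vv i)) :
    ∃ (S : N → Finset M) (p : M → ℝ),
      -- `S` is an allocation
      (∀ i i', i ≠ i' → Disjoint (S i) (S i')) ∧
      -- `p` is a nonnegative pricing
      (∀ j, 0 ≤ p j) ∧
      -- condition (1): every agent's bundle maximizes her utility
      (∀ i (X : Finset M), v i X - ∑ j ∈ X, p j ≤ v i (S i) - ∑ j ∈ S i, p j) ∧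
      -- condition (2): unallocated items have price zero
      (∀ j : M, (∀ i, j ∉ S i) → p j = 0) := by
  classical
  -- the set of matchings and the maximal welfare
  set val : (N → Option M) → ℝ := fun ν => ∑ i, (ν i).elim 0 (vv i) with hvaldef
  set T : Finset (N → Option M) :=
    univ.filter (fun ν => ∀ i i' j, ν i = some j → ν i' = some j → i = i') with hTdef
  have hTne : T.Nonempty := ⟨fun _ => none, by simp [hTdef]⟩
  obtain ⟨μ, hμT, hμW⟩ := Finset.exists_mem_eq_sup' hTne val
  have hμm : ∀ i i' j, μ i = some j → μ i' = some j → i = i' := by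
    have := Finset.mem_filter.mp hμT
    exact this.2
  have hvalmax : ∀ ν ∈ T, val ν ≤ val μ := fun ν hν => hμW ▸ Finset.le_sup' val hν
  -- a uniform bound
  set B : ℝ := ∑ i, ∑ j, vv i j with hBdef
  have hB0 : 0 ≤ B := Finset.sum_nonneg fun i _ => Finset.sum_nonneg fun j _ => hvv i j
  have hBij : ∀ i j, vv i j ≤ B := by
    intro i j
    calc vv i j ≤ ∑ j', vv i j' := Finset.single_le_sum (fun j' _ => hvv i j') (mem_univ j)
      _ ≤ B := Finset.single_le_sum
          (fun i' _ => Finset.sum_nonneg fun j' _ => hvv i' j') (mem_univ i)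
  -- the dual feasible set and objective
  set Df : ((N → ℝ) × (M → ℝ)) → ℝ := fun x => ∑ i, x.1 i + ∑ j, x.2 j with hDfdef
  set F : Set ((N → ℝ) × (M → ℝ)) :=
    {x | (∀ i, 0 ≤ x.1 i) ∧ (∀ j, 0 ≤ x.2 j) ∧ ∀ i j, vv i j ≤ x.1 i + x.2 j} with hFdef
  set D₀ : ℝ := (Fintype.card N) * B with hD₀def
  have hx₀F : ((fun _ => B, fun _ => 0) : (N → ℝ) × (M → ℝ)) ∈ F :=
    ⟨fun _ => hB0, fun _ => le_refl 0, fun i j => by simpa using hBij i j⟩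
  have hDx₀ : Df ((fun _ => B, fun _ => 0)) = D₀ := by
    simp [hDfdef, hD₀def, Finset.sum_const, Finset.card_univ]
  set K : Set ((N → ℝ) × (M → ℝ)) := F ∩ {x | Df x ≤ D₀} with hKdef
  have hDcont : Continuous Df := by
    apply Continuous.add
    · exact continuous_finset_sum _ fun i _ => (continuous_apply i).comp continuous_fst
    · exact continuous_finset_sum _ fun j _ => (continuous_apply j).comp continuous_snd
  have hFclosed : IsClosed F := by
    have hFeq : F = (⋂ i, {x : (N → ℝ) × (M → ℝ) | 0 ≤ x.1 i}) ∩
        ((⋂ j, {x : (N → ℝ) × (M → ℝ) | 0 ≤ x.2 j}) ∩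
          (⋂ i, ⋂ j, {x : (N → ℝ) × (M → ℝ) | vv i j ≤ x.1 i + x.2 j})) := by
      ext x
      simp only [hFdef, Set.mem_setOf_eq, Set.mem_inter_iff, Set.mem_iInter]
    rw [hFeq]
    refine IsClosed.inter (isClosed_iInter fun i =>
        isClosed_le continuous_const ((continuous_apply i).comp continuous_fst))
      (IsClosed.inter (isClosed_iInter fun j =>
        isClosed_le continuous_const ((continuous_apply j).comp continuous_snd))
      (isClosed_iInter fun i => isClosed_iInter fun j =>
        isClosed_le continuous_const (((continuous_apply i).comp continuous_fst).add
          ((continuous_apply j).comp continuous_snd))))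
  have hKclosed : IsClosed K := hFclosed.inter (isClosed_le hDcont continuous_const)
  have hKne : K.Nonempty := ⟨_, hx₀F, by rw [Set.mem_setOf_eq, hDx₀]⟩
  have hKsub : K ⊆ (Set.univ.pi fun _ : N => Set.Icc (0:ℝ) D₀) ×ˢ
      (Set.univ.pi fun _ : M => Set.Icc (0:ℝ) D₀) := by
    rintro ⟨uu, pp⟩ ⟨⟨hu, hp, _⟩, hD⟩
    have hD' : ∑ i, uu i + ∑ j, pp j ≤ D₀ := hD
    have hsum1 : (0:ℝ) ≤ ∑ j, pp j := Finset.sum_nonneg fun j _ => hp j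
    have hsum2 : (0:ℝ) ≤ ∑ i, uu i := Finset.sum_nonneg fun i _ => hu i
    constructor
    · intro i _
      refine ⟨hu i, ?_⟩
      have h1 : uu i ≤ ∑ i', uu i' := Finset.single_le_sum (fun i' _ => hu i') (mem_univ i)
      linarith
    · intro j _
      refine ⟨hp j, ?_⟩
      have h1 : pp j ≤ ∑ j', pp j' := Finset.single_le_sum (fun j' _ => hp j') (mem_univ j)
      linarith
  have hKcp : IsCompact K :=
    ((isCompact_univ_pi fun _ => isCompact_Icc).prod
      (isCompact_univ_pi fun _ => isCompact_Icc)).of_isClosed_subset hKclosed hKsub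
  obtain ⟨⟨u, p⟩, hxK, hxmin⟩ := hKcp.exists_isMinOn hKne hDcont.continuousOn
  obtain ⟨hu0, hp0, hfeas⟩ := hxK.1
  have hxD : Df (u, p) ≤ D₀ := hxK.2
  have hminF : ∀ y ∈ F, Df (u, p) ≤ Df y := by
    intro y hy
    by_cases h : Df y ≤ D₀
    · exact isMinOn_iff.mp hxmin y ⟨hy, h⟩
    · push_neg at h
      exact le_trans hxD h.le
  -- tight graph
  set E : N → M → Prop := fun i j => u i + p j ≤ vv i j with hEdef
  -- two Hall matchings, from the two sides
  have hmin1 : ∀ (q' : N → ℝ) (g' : M → ℝ), (∀ a, 0 ≤ q' a) → (∀ i, 0 ≤ g' i) →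
      (∀ a i, vv a i ≤ q' a + g' i) → ∑ a, u a + ∑ i, p i ≤ ∑ a, q' a + ∑ i, g' i :=
    fun q' g' h1 h2 h3 => hminF (q', g') ⟨h1, h2, h3⟩
  obtain ⟨f₁, hf₁inj, hf₁⟩ := hall_of_min vv u p hu0 hp0 hfeas hmin1
  obtain ⟨f₂, hf₂inj, hf₂⟩ := hall_of_min (fun j i => vv i j) p u hp0 hu0
    (fun j i => by linarith [hfeas i j])
    (fun q' g' h1 h2 h3 => by
      have := hminF (g', q') ⟨h2, h1, fun i j => by linarith [h3 j i]⟩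
      have h4 : Df (u, p) = ∑ a, u a + ∑ i, p i := rfl
      have h5 : Df (g', q') = ∑ a, g' a + ∑ i, q' i := rfl
      rw [h4, h5] at this
      linarith)
  set σ : N → Option M := fun i => if h : 0 < u i then some (f₁ ⟨i, h⟩) else none with hσdef
  set τ : M → Option N := fun j => if h : 0 < p j then some (f₂ ⟨j, h⟩) else none with hτdef
  have hσm : ∀ i i' j, σ i = some j → σ i' = some j → i = i' := by
    intro i i' j h1 h2
    by_cases hi : 0 < u i
    · by_cases hi' : 0 < u i'
      · simp only [hσdef, dif_pos hi, Option.some.injEq] at h1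
        simp only [hσdef, dif_pos hi', Option.some.injEq] at h2
        have : f₁ ⟨i, hi⟩ = f₁ ⟨i', hi'⟩ := by rw [h1, h2]
        exact congrArg Subtype.val (hf₁inj this)
      · simp [hσdef, dif_neg hi'] at h2
    · simp [hσdef, dif_neg hi] at h1
  have hτm : ∀ j j' i, τ j = some i → τ j' = some i → j = j' := by
    intro j j' i h1 h2
    by_cases hj : 0 < p j
    · by_cases hj' : 0 < p j'
      · simp only [hτdef, dif_pos hj, Option.some.injEq] at h1
        simp only [hτdef, dif_pos hj', Option.some.injEq] at h2
        have : f₂ ⟨j, hj⟩ = f₂ ⟨j', hj'⟩ := by rw [h1, h2]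
        exact congrArg Subtype.val (hf₂inj this)
      · simp [hτdef, dif_neg hj'] at h2
    · simp [hτdef, dif_neg hj] at h1
  have hσE : ∀ i j, σ i = some j → E i j := by
    intro i j h
    by_cases hi : 0 < u i
    · simp only [hσdef, dif_pos hi, Option.some.injEq] at h
      exact h ▸ hf₁ ⟨i, hi⟩
    · simp [hσdef, dif_neg hi] at h
  have hτE : ∀ i j, τ j = some i → E i j := by
    intro i j h
    by_cases hj : 0 < p j
    · simp only [hτdef, dif_pos hj, Option.some.injEq] at h
      have := hf₂ ⟨j, hj⟩
      rw [h] at this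
      simp only [hEdef]
      linarith
    · simp [hτdef, dif_neg hj] at h
  have hσdom : ∀ i, 0 < u i → σ i ≠ none := fun i hi => by simp [hσdef, dif_pos hi]
  have hτdom : ∀ j, 0 < p j → τ j ≠ none := fun j hj => by simp [hτdef, dif_pos hj]
  -- combine into one matching covering both sides
  set P : Finset M := univ.filter fun j => 0 < p j with hPdef
  obtain ⟨σs, hsm, hsE, hsdom, hscov⟩ := md_iter E τ hτm hτE P.card P
    (fun j hj => hτdom j (Finset.mem_filter.mp hj).2) le_rfl σ hσm hσE
  have hcov₁ : ∀ i, 0 < u i → σs i ≠ none := fun i hi => hsdom i (hσdom i hi)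
  have hcov₂ : ∀ j, 0 < p j → ∃ i, σs i = some j :=
    fun j hj => hscov j (Finset.mem_filter.mpr ⟨mem_univ _, hj⟩)
  -- strong duality: the dual optimum is at most the maximal welfare
  have hσsT : σs ∈ T := Finset.mem_filter.mpr ⟨mem_univ _, hsm⟩
  have hvalW : val σs ≤ val μ := hvalmax σs hσsT
  have hDu : ∑ i, u i = ∑ i, (σs i).elim 0 (fun _ => u i) := by
    refine Finset.sum_congr rfl fun i _ => ?_
    cases hsi : σs i with
    | none =>
      have h1 : ¬ 0 < u i := fun h => hcov₁ i h hsi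
      have h2 : u i = 0 := le_antisymm (not_lt.mp h1) (hu0 i)
      simp [h2]
    | some j => simp
  have hDp : ∑ j, p j = ∑ i, (σs i).elim 0 p := by
    rw [matching_sum_eq σs hsm p]
    refine Finset.sum_congr rfl fun j _ => ?_
    by_cases hc : ∃ i, σs i = some j
    · rw [if_pos hc]
    · rw [if_neg hc]
      have h1 : ¬ 0 < p j := fun h => hc (hcov₂ j h)
      exact le_antisymm (not_lt.mp h1) (hp0 j)
  have hDle : ∑ i, u i + ∑ j, p j ≤ val σs := by
    have e : ∀ i, (σs i).elim 0 (fun _ => u i) + (σs i).elim 0 p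
        = (σs i).elim 0 (fun j => u i + p j) := by
      intro i; cases σs i <;> simp
    have le1 : ∀ i, (σs i).elim 0 (fun j => u i + p j) ≤ (σs i).elim 0 (vv i) := by
      intro i
      cases hsi : σs i with
      | none => simp
      | some j => simpa using hsE i j hsi
    calc ∑ i, u i + ∑ j, p j
        = ∑ i, ((σs i).elim 0 (fun _ => u i) + (σs i).elim 0 p) := by
          rw [hDu, hDp, Finset.sum_add_distrib]
      _ = ∑ i, (σs i).elim 0 (fun j => u i + p j) := Finset.sum_congr rfl fun i _ => e i
      _ ≤ ∑ i, (σs i).elim 0 (vv i) := Finset.sum_le_sum fun i _ => le1 i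
      _ = val σs := rfl
  have hDW : ∑ i, u i + ∑ j, p j ≤ val μ := le_trans hDle hvalW
  -- complementary slackness with the optimal matching μ
  set a : N → ℝ := fun i => (μ i).elim 0 (vv i) with hadef
  set c : N → ℝ := fun i => u i + (μ i).elim 0 p with hcdef
  have hac : ∀ i, a i ≤ c i := by
    intro i
    cases hμi : μ i with
    | none => simp [hadef, hcdef, hμi, hu0 i]
    | some j =>
      simp only [hadef, hcdef, hμi, Option.elim]
      exact hfeas i j
  have hμp : ∑ i, (μ i).elim 0 p = ∑ j, if ∃ i, μ i = some j then p j else 0 :=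
    matching_sum_eq μ hμm p
  have hite_le : ∀ j, (if ∃ i, μ i = some j then p j else 0) ≤ p j := by
    intro j
    by_cases hc : ∃ i, μ i = some j
    · rw [if_pos hc]
    · rw [if_neg hc]; exact hp0 j
  have hsumc_eq : ∑ i, c i = ∑ i, u i + ∑ j, (if ∃ i, μ i = some j then p j else 0) := by
    simp only [hcdef]
    rw [Finset.sum_add_distrib, hμp]
  have hsumc_le : ∑ i, c i ≤ ∑ i, u i + ∑ j, p j := by
    rw [hsumc_eq]
    have := Finset.sum_le_sum (fun j (_ : j ∈ univ) => hite_le j)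
    linarith
  have hWa : ∑ i, a i = val μ := rfl
  have hchain : ∑ i, a i ≤ ∑ i, c i := Finset.sum_le_sum fun i _ => hac i
  have hsandwich : ∑ i, c i = ∑ i, a i := by linarith
  have haceq : ∀ i, a i = c i := by
    intro i₀
    by_contra hne
    have hlt : a i₀ < c i₀ := lt_of_le_of_ne (hac i₀) hne
    have := Finset.sum_lt_sum (fun i (_ : i ∈ univ) => hac i) ⟨i₀, mem_univ _, hlt⟩
    linarith
  have hsum_ite_eq : ∑ j, (if ∃ i, μ i = some j then p j else 0) = ∑ j, p j := by
    have h2 := Finset.sum_le_sum (fun j (_ : j ∈ univ) => hite_le j)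
    linarith
  have hpeq : ∀ j, (if ∃ i, μ i = some j then p j else 0) = p j := by
    intro j₀
    by_contra hne
    have hlt : (if ∃ i, μ i = some j₀ then p j₀ else 0) < p j₀ :=
      lt_of_le_of_ne (hite_le j₀) hne
    have := Finset.sum_lt_sum (fun j (_ : j ∈ univ) => hite_le j) ⟨j₀, mem_univ _, hlt⟩
    linarith
  -- construct the allocation and conclude
  refine ⟨fun i => (μ i).elim ∅ (fun j => {j}), p, ?_, hp0, ?_, ?_⟩
  · intro i i' hne
    cases hμi : μ i with
    | none => simp [hμi]
    | some j =>
      cases hμi' : μ i' with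
      | none => simp [hμi']
      | some j' =>
        simp only [hμi, hμi', Option.elim]
        rw [Finset.disjoint_singleton]
        intro h
        exact hne (hμm i i' j hμi (by rw [h]; exact hμi'))
  · intro i X
    have hRHS : v i ((μ i).elim ∅ (fun j => {j})) - ∑ j ∈ (μ i).elim ∅ (fun j => {j}), p j
        = u i := by
      cases hμi : μ i with
      | none =>
        have hui : u i = 0 := by
          have := haceq i
          simp only [hadef, hcdef, hμi, Option.elim] at this
          linarith
        simp [hv0 i, hui]
      | some j =>
        have heq : vv i j = u i + p j := by
          have := haceq i
          simpa [hadef, hcdef, hμi] using this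
        simp only [Option.elim]
        rw [hv i {j} (Finset.singleton_nonempty j), Finset.sup'_singleton,
          Finset.sum_singleton]
        linarith
    rw [hRHS]
    rcases X.eq_empty_or_nonempty with rfl | hX
    · simp [hv0 i, hu0 i]
    · obtain ⟨j₀, hj₀X, hj₀⟩ := Finset.exists_mem_eq_sup' hX (vv i)
      rw [hv i X hX, hj₀]
      have h1 : vv i j₀ ≤ u i + p j₀ := hfeas i j₀
      have h2 : p j₀ ≤ ∑ j ∈ X, p j := Finset.single_le_sum (fun j _ => hp0 j) hj₀X
      linarith
  · intro j hj
    have hnc : ¬ ∃ i, μ i = some j := by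
      rintro ⟨i, hi⟩
      exact hj i (by simp [hi])
    have := hpeq j
    rw [if_neg hnc] at this
    exact this.symm
end

section
/- Every monotone, normalized submodular valuation is XOS (fractionally subadditive): if M is a finite set of items and v : Finset M → ℝ satisfies v(∅) = 0, v(X) ≤ v(Y) whenever X ⊆ Y, and v(X) + v(Y) ≥ v(X ∪ Y) + v(X ∩ Y) for all X, Y ⊆ M, then there exists a nonempty finite family of vectors a_t : M → ℝ with a_t(j) ≥ 0 for all t, j such that v(X) = max_t ∑_{j∈X} a_t(j) for every X ⊆ M. -/
private lemma xos_marg {M : Type*} [Fintype M] [DecidableEq M]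
    (v : Finset M → ℝ)
    (hsubmod : ∀ X Y : Finset M, v (X ∪ Y) + v (X ∩ Y) ≤ v X + v Y)
    (A B : Finset M) (x : M) (hAB : A ⊆ B) (hxB : x ∉ B) :
    v (insert x B) - v B ≤ v (insert x A) - v A := by
  have h := hsubmod (insert x A) B
  have h1 : insert x A ∪ B = insert x B := by
    ext i
    simp only [Finset.mem_union, Finset.mem_insert]
    constructor
    · rintro (⟨h | h⟩ | h) <;> [left; right; right] <;> first | exact h | exact hAB h
    · rintro (h | h)
      · exact Or.inl (Or.inl h)
      · exact Or.inr h
  have h2 : insert x A ∩ B = A := by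
    ext i
    simp only [Finset.mem_inter, Finset.mem_insert]
    constructor
    · rintro ⟨h | h, hB⟩
      · exact absurd (h ▸ hB) hxB
      · exact h
    · intro h; exact ⟨Or.inr h, hAB h⟩
  rw [h1, h2] at h
  linarith

private lemma xos_aux {M : Type*} [Fintype M] [DecidableEq M]
    (v : Finset M → ℝ) (hnorm : v ∅ = 0)
    (hsubmod : ∀ X Y : Finset M, v (X ∪ Y) + v (X ∩ Y) ≤ v X + v Y)
    (key : M → ℕ) (hkey : Function.Injective key) :
    ∀ X : Finset M,
      (∑ j ∈ X, (v (insert j (Finset.univ.filter fun i => key i < key j))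
          - v (Finset.univ.filter fun i => key i < key j)) ≤ v X) ∧
      ((∀ j ∈ X, (Finset.univ.filter fun i => key i < key j) ⊆ X) →
        ∑ j ∈ X, (v (insert j (Finset.univ.filter fun i => key i < key j))
          - v (Finset.univ.filter fun i => key i < key j)) = v X) := by
  intro X
  induction X using Finset.strongInduction with
  | _ X ih =>
    rcases X.eq_empty_or_nonempty with rfl | hXne
    · simp [hnorm]
    · obtain ⟨m, hmX, hmax⟩ := X.exists_max_image key hXne
      set p : M → Finset M := fun j => Finset.univ.filter fun i => key i < key j with hp
      set a : M → ℝ := fun j => v (insert j (p j)) - v (p j) with ha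
      have hX' : X.erase m ⊂ X := Finset.erase_ssubset hmX
      have ihE := ih (X.erase m) hX'
      have hmE : m ∉ X.erase m := Finset.notMem_erase m X
      have hsub : X.erase m ⊆ p m := by
        intro i hi
        simp only [hp, Finset.mem_filter, Finset.mem_univ, true_and]
        have hiX := Finset.mem_of_mem_erase hi
        have : key i ≤ key m := hmax i hiX
        have hne : i ≠ m := Finset.ne_of_mem_erase hi
        exact lt_of_le_of_ne this (fun h => hne (hkey h))
      have hmp : m ∉ p m := by
        simp [hp]
      have hins : insert m (X.erase m) = X := Finset.insert_erase hmX
      have hmarg : a m ≤ v X - v (X.erase m) := by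
        have := xos_marg v hsubmod (X.erase m) (p m) m hsub hmp
        rw [hins] at this
        exact this
      have hsplit : ∑ j ∈ X, a j = a m + ∑ j ∈ X.erase m, a j :=
        (Finset.add_sum_erase X a hmX).symm
      constructor
      · rw [hsplit]
        linarith [ihE.1]
      · intro hXcl
        have hErest : ∀ j ∈ X.erase m, p j ⊆ X.erase m := by
          intro j hj i hi
          have hjX := Finset.mem_of_mem_erase hj
          have hiX : i ∈ X := hXcl j hjX hi
          refine Finset.mem_erase.mpr ⟨?_, hiX⟩
          intro hEq
          simp only [hp, Finset.mem_filter, Finset.mem_univ, true_and] at hi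
          rw [hEq] at hi
          have hkj : key j ≤ key m := hmax j hjX
          omega
        have hpm : p m = X.erase m := by
          apply Finset.Subset.antisymm _ hsub
          intro i hi
          have hiX : i ∈ X := hXcl m hmX hi
          refine Finset.mem_erase.mpr ⟨?_, hiX⟩
          exact fun h => hmp (h ▸ hi)
        have ham : a m = v X - v (X.erase m) := by
          simp only [ha, hpm, hins]
        rw [hsplit, ihE.2 hErest, ham]
        ring

/-- Every monotone, normalized submodular valuation is XOS (fractionally subadditive):
there is a nonempty finite family of nonnegative additive vectors whose pointwise
maximum of bundle sums equals `v` on every bundle. -/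
theorem submodular_is_xos {M : Type*} [Fintype M] [DecidableEq M]
    (v : Finset M → ℝ)
    (hnorm : v ∅ = 0)
    (hmono : ∀ X Y : Finset M, X ⊆ Y → v X ≤ v Y)
    (hsubmod : ∀ X Y : Finset M, v (X ∪ Y) + v (X ∩ Y) ≤ v X + v Y) :
    ∃ (A : Finset (M → ℝ)) (hA : A.Nonempty),
      (∀ a ∈ A, ∀ j, 0 ≤ a j) ∧
      ∀ X : Finset M, v X = A.sup' hA (fun a => ∑ j ∈ X, a j) := by
  classical
  set n := Fintype.card M with hn
  set e := Fintype.equivFin M with he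
  set key : Finset M → M → ℕ := fun S j => (if j ∈ S then 0 else n) + (e j : ℕ) with hkey
  have hkeyinj : ∀ S, Function.Injective (key S) := by
    intro S x y hxy
    simp only [hkey] at hxy
    have hx : ((e x : ℕ)) < n := (e x).2
    have hy : ((e y : ℕ)) < n := (e y).2
    have : (e x : ℕ) = (e y : ℕ) := by
      by_cases h1 : x ∈ S <;> by_cases h2 : y ∈ S <;> simp [h1, h2] at hxy <;> omega
    exact e.injective (Fin.ext this)
  set p : Finset M → M → Finset M :=
    fun S j => Finset.univ.filter fun i => key S i < key S j with hp
  set a : Finset M → M → ℝ :=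
    fun S j => v (insert j (p S j)) - v (p S j) with ha
  have haux := fun S => xos_aux v hnorm hsubmod (key S) (hkeyinj S)
  have hanonneg : ∀ S j, 0 ≤ a S j := by
    intro S j
    have : p S j ⊆ insert j (p S j) := Finset.subset_insert _ _
    have := hmono _ _ this
    simp only [ha]
    linarith
  refine ⟨Finset.univ.image (fun S => a S), ⟨a ∅, Finset.mem_image_of_mem _ (Finset.mem_univ ∅)⟩, ?_, ?_⟩
  · intro f hf j
    obtain ⟨S, _, rfl⟩ := Finset.mem_image.mp hf
    exact hanonneg S j
  · intro X
    apply le_antisymm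
    · have hcl : ∀ j ∈ X, p X j ⊆ X := by
        intro j hj i hi
        simp only [hp, Finset.mem_filter, Finset.mem_univ, true_and] at hi
        by_contra hiX
        have h1 : ((e j : ℕ)) < n := (e j).2
        simp only [hkey, if_neg hiX, if_pos hj] at hi
        omega
      have heq := (haux X X).2 hcl
      have hmem : a X ∈ Finset.univ.image (fun S => a S) :=
        Finset.mem_image_of_mem _ (Finset.mem_univ X)
      have hle := Finset.le_sup' (fun g : M → ℝ => ∑ j ∈ X, g j) hmem
      calc v X = ∑ j ∈ X, a X j := heq.symm
        _ ≤ _ := hle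
    · apply Finset.sup'_le
      intro f hf
      obtain ⟨S, _, rfl⟩ := Finset.mem_image.mp hf
      exact (haux S X).1
end
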